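/- arXiv:1907.02717 — 2 statements merged into one kernel-verified Lean document; each statement's English description precedes it below -/
import Mathlib

section
/- Let {G_N} be a family of weighted undirected graphs with uniformly bounded degrees (each at most q) and edge weights at most w_max, admitting for each N a vertex partition V = X₁ ∪ X₂ ∪ X₃ with no edges between X₁ and X₃. If N₂/N₁ → 0 and N₂/N₃ → 0 as N → ∞, then λ₂(G_N) → 0 as N → ∞. -/
open Matrix Filter

/-- Sorted (ascending) eigenvalues of a Hermitian matrix. -/
noncomputable def sortedEig {N : ℕ} {L : Matrix (Fin N) (Fin N) ℝ}
    (hL : L.IsHermitian) : Fin N → ℝ :=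
  hL.eigenvalues ∘ Tuple.sort hL.eigenvalues

/-- Weighted graph Laplacian. -/
noncomputable def lap {N : ℕ} (w : Fin N → Fin N → ℝ) : Matrix (Fin N) (Fin N) ℝ :=
  Matrix.of fun i j => if i = j then ∑ k, w i k else - w i j

lemma lemB {N : ℕ} (hN : 1 < N) {A : Matrix (Fin N) (Fin N) ℝ} (hA : A.IsHermitian)
    (g : Fin N → ℝ)
    (hg : ∑ j, hA.eigenvectorBasis (Tuple.sort hA.eigenvalues ⟨0, by omega⟩) j * g j = 0) :
    sortedEig hA ⟨1, hN⟩ * (∑ i, g i ^ 2) ≤ g ⬝ᵥ (A *ᵥ g) := by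
  set σ := Tuple.sort hA.eigenvalues with hσ
  set U : Matrix (Fin N) (Fin N) ℝ := (hA.eigenvectorUnitary : Matrix (Fin N) (Fin N) ℝ) with hU
  set c : Fin N → ℝ := g ᵥ* U with hc
  have hUU : U * star U = 1 := (Matrix.mem_unitaryGroup_iff).mp (hA.eigenvectorUnitary).2
  have hcs : star U *ᵥ g = c := by
    funext i
    simp [hc, Matrix.mulVec, Matrix.vecMul, dotProduct, mul_comm]
  have h1 : g ⬝ᵥ (A *ᵥ g) = ∑ i, hA.eigenvalues i * c i ^ 2 := by
    conv_lhs => rw [hA.spectral_theorem, Unitary.conjStarAlgAut_apply, ← hU]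
    rw [← Matrix.mulVec_mulVec, ← Matrix.mulVec_mulVec, hcs, Matrix.dotProduct_mulVec (v := g)]
    rw [← hc]
    simp [dotProduct, Matrix.mulVec_diagonal, RCLike.ofReal_real_eq_id]
    ring_nf
    exact Finset.sum_congr rfl fun i _ => by ring
  have h2 : ∑ i, g i ^ 2 = ∑ i, c i ^ 2 := by
    have : U *ᵥ c = g := by rw [← hcs, Matrix.mulVec_mulVec, hUU, Matrix.one_mulVec]
    calc ∑ i, g i ^ 2 = g ⬝ᵥ g := by simp [dotProduct, sq]
      _ = g ⬝ᵥ (U *ᵥ c) := by rw [this]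
      _ = c ⬝ᵥ c := by rw [Matrix.dotProduct_mulVec, ← hc]
      _ = ∑ i, c i ^ 2 := by simp [dotProduct, sq]
  have h3 : c (σ ⟨0, by omega⟩) = 0 := by
    rw [hc, ← hg]
    simp [Matrix.vecMul, dotProduct, hU, Matrix.IsHermitian.eigenvectorUnitary_apply,
      mul_comm]
  rw [h1, h2, Finset.mul_sum]
  apply Finset.sum_le_sum
  intro i _
  by_cases hi : i = σ ⟨0, by omega⟩
  · subst hi; rw [h3]; simp
  · have hj : σ (σ.symm i) = i := σ.apply_symm_apply i
    have hj0 : (σ.symm i).val ≠ 0 := by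
      intro h; exact hi (by rw [← hj]; congr 1; exact Fin.ext h)
    have hle : (⟨1, hN⟩ : Fin N) ≤ σ.symm i := by
      exact Fin.mk_le_of_le_val (Nat.one_le_iff_ne_zero.mpr hj0)
    have := Tuple.monotone_sort hA.eigenvalues hle
    simp only [Function.comp_apply, ← hσ, hj] at this
    exact mul_le_mul_of_nonneg_right this (sq_nonneg _)




lemma lap_mulVec_one {N : ℕ} (w : Fin N → Fin N → ℝ) (hdiag : ∀ i, w i i = 0) :
    lap w *ᵥ (fun _ => (1:ℝ)) = 0 := by
  funext i
  simp only [lap, Matrix.mulVec, dotProduct, Matrix.of_apply, mul_one,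
    Pi.zero_apply]
  have key : ∀ j, (if i = j then (∑ k, w i k) else -w i j)
      = (if i = j then (∑ k, w i k) + w i j else 0) - w i j := by
    intro j; split <;> ring
  rw [Finset.sum_congr rfl (fun j _ => key j), Finset.sum_sub_distrib,
    Finset.sum_ite_eq]
  simp [hdiag i]

lemma lap_quad {N : ℕ} (w : Fin N → Fin N → ℝ) (hsym : ∀ i j, w i j = w j i)
    (hdiag : ∀ i, w i i = 0) (x : Fin N → ℝ) :
    x ⬝ᵥ (lap w *ᵥ x) = (1/2) * ∑ i, ∑ j, w i j * (x i - x j)^2 := by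
  have inner : ∀ i, (∑ j, (if i = j then (∑ k, w i k) else -w i j) * x j)
      = (∑ k, w i k) * x i - ∑ j, w i j * x j := by
    intro i
    have key : ∀ j, (if i = j then (∑ k, w i k) else -w i j) * x j
        = (if i = j then ((∑ k, w i k) + w i j) * x j else 0) - w i j * x j := by
      intro j; split <;> ring
    rw [Finset.sum_congr rfl (fun j _ => key j), Finset.sum_sub_distrib,
      Finset.sum_ite_eq]
    simp only [Finset.mem_univ, if_true, hdiag i]
    ring
  have step : ∀ i, x i * ((∑ k, w i k) * x i - ∑ j, w i j * x j)
      = (∑ k, w i k * x i ^ 2) - ∑ j, w i j * (x i * x j) := by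
    intro i
    have h1 : x i * ((∑ k, w i k) * x i) = ∑ k, w i k * x i ^ 2 := by
      rw [show x i * ((∑ k, w i k) * x i) = (∑ k, w i k) * x i ^ 2 by ring,
        Finset.sum_mul]
    have h2 : x i * (∑ j, w i j * x j) = ∑ j, w i j * (x i * x j) := by
      rw [Finset.mul_sum]
      exact Finset.sum_congr rfl fun j _ => by ring
    rw [mul_sub, h1, h2]
  have lhs : x ⬝ᵥ (lap w *ᵥ x)
      = (∑ i, ∑ k, w i k * x i ^ 2) - ∑ i, ∑ j, w i j * (x i * x j) := by
    simp only [dotProduct, Matrix.mulVec, lap, Matrix.of_apply]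
    rw [Finset.sum_congr rfl (fun i _ => by rw [inner i, step i]),
      Finset.sum_sub_distrib]
  have hswap : (∑ i, ∑ j, w i j * x j ^ 2) = ∑ i, ∑ k, w i k * x i ^ 2 := by
    rw [Finset.sum_comm]
    exact Finset.sum_congr rfl fun i _ => Finset.sum_congr rfl fun j _ => by
      rw [hsym]
  have expand : ∀ i j, w i j * (x i - x j) ^ 2
      = w i j * x i ^ 2 + w i j * x j ^ 2 - 2 * (w i j * (x i * x j)) := by
    intro i j; ring
  rw [lhs]
  simp only [expand, Finset.sum_add_distrib, Finset.sum_sub_distrib, ← Finset.mul_sum]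
  rw [hswap]
  ring


lemma lemA {N : ℕ} (hN : 1 < N) {A : Matrix (Fin N) (Fin N) ℝ} (hA : A.IsHermitian)
    (hquad : ∀ x : Fin N → ℝ, 0 ≤ x ⬝ᵥ (A *ᵥ x))
    (hone : A *ᵥ (fun _ => (1:ℝ)) = 0)
    (f : Fin N → ℝ) (hf : ∑ i, f i = 0) :
    sortedEig hA ⟨1, hN⟩ * (∑ i, f i ^ 2) ≤ f ⬝ᵥ (A *ᵥ f) := by
  have hPSD : A.PosSemidef := Matrix.posSemidef_iff_dotProduct_mulVec.mpr ⟨hA, fun x => by simpa using hquad x⟩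
  set v : Fin N → ℝ :=
    ⇑(hA.eigenvectorBasis (Tuple.sort hA.eigenvalues ⟨0, by omega⟩)) with hv
  set α := ∑ j, v j * f j with hα'
  set β := -(∑ j, v j) with hβ'
  set lam := sortedEig hA ⟨1, hN⟩ with hlam'
  have hlam : 0 ≤ lam := hPSD.eigenvalues_nonneg _
  by_cases hα : α = 0
  · exact lemB hN hA f (hα' ▸ hα)
  · set g : Fin N → ℝ := fun i => α + β * f i with hg'
    have hvg : ∑ j, v j * g j = 0 := by
      have : ∀ j, v j * g j = α * v j + β * (v j * f j) := fun j => by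
        simp only [hg']; ring
      simp only [this, Finset.sum_add_distrib, ← Finset.mul_sum, ← hα']
      rw [show (∑ j, v j) = -β by rw [hβ']; ring]
      ring
    have hB := lemB hN hA g hvg
    have hAg : A *ᵥ g = β • (A *ᵥ f) := by
      have hgdecomp : g = α • (fun _ => (1:ℝ)) + β • f := by
        funext i; simp [hg']
      rw [hgdecomp, Matrix.mulVec_add, Matrix.mulVec_smul, Matrix.mulVec_smul, hone]
      simp
    have h1Af : (fun _ => (1:ℝ)) ⬝ᵥ (A *ᵥ f) = 0 := by
      rw [Matrix.dotProduct_mulVec]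
      have hsymA : Aᵀ = A := by
        have := hA.eq
        rwa [Matrix.conjTranspose_eq_transpose_of_trivial] at this
      have : (fun _ => (1:ℝ)) ᵥ* A = 0 := by
        rw [← Matrix.mulVec_transpose, hsymA, hone]
      rw [this]
      simp
    have hgAg : g ⬝ᵥ (A *ᵥ g) = β ^ 2 * (f ⬝ᵥ (A *ᵥ f)) := by
      rw [hAg, dotProduct_smul]
      have : g ⬝ᵥ (A *ᵥ f) = β * (f ⬝ᵥ (A *ᵥ f)) := by
        have hgdecomp : g = α • (fun _ => (1:ℝ)) + β • f := by
          funext i; simp [hg']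
        rw [hgdecomp, add_dotProduct, smul_dotProduct,
          smul_dotProduct, h1Af]
        simp
      rw [this]; simp only [smul_eq_mul]; ring
    have hng : ∑ i, g i ^ 2 = α ^ 2 * N + β ^ 2 * ∑ i, f i ^ 2 := by
      have : ∀ i, g i ^ 2 = α ^ 2 + (2 * α * β) * f i + β ^ 2 * f i ^ 2 := fun i => by
        simp only [hg']; ring
      simp only [this, Finset.sum_add_distrib, ← Finset.mul_sum, hf]
      simp [mul_comm]
    rw [hng, hgAg] at hB
    by_cases hβ : β = 0
    · have hN0 : (0:ℝ) < N := by positivity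
      have : lam * (α ^ 2 * N) ≤ 0 := by
        have := hB; rw [hβ] at this; simpa using this
      have hlam0 : lam = 0 := by
        have hα2 : 0 < α ^ 2 * N := by positivity
        nlinarith
      rw [hlam0]
      simpa using hquad f
    · have hβ2 : (0:ℝ) < β ^ 2 := by positivity
      have hα2N : (0:ℝ) ≤ α ^ 2 * N := by positivity
      nlinarith


section quadbound

variable {N : ℕ} (hN : 1 < N) (q : ℕ) (wmax : ℝ) (hwm0 : 0 ≤ wmax)
  (w : Fin N → Fin N → ℝ)
  (hsym : ∀ i j, w i j = w j i) (hnn : ∀ i j, 0 ≤ w i j)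
  (hdiag : ∀ i, w i i = 0) (hwmax : ∀ i j, w i j ≤ wmax)
  (hdeg : ∀ i, (Finset.univ.filter fun j => w i j ≠ 0).card ≤ q)
  (X₁ X₂ X₃ : Finset (Fin N))
  (h12 : Disjoint X₁ X₂) (h13 : Disjoint X₁ X₃) (h23 : Disjoint X₂ X₃)
  (hcover : X₁ ∪ X₂ ∪ X₃ = Finset.univ)
  (hN1 : 0 < X₁.card) (hN2 : 0 < X₂.card) (hN3 : 0 < X₃.card)
  (hnoedge : ∀ i ∈ X₁, ∀ j ∈ X₃, w i j = 0)


set_option maxHeartbeats 1000000 in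
include hsym hnn hdiag hwmax hdeg h12 h13 h23 hcover hN1 hN2 hN3 hnoedge hwm0 in
lemma perN (hH : (lap w).IsHermitian) :
    sortedEig hH ⟨1, hN⟩
      ≤ q * wmax * ((X₂.card / X₁.card : ℝ) + (X₂.card / X₃.card : ℝ)) := by
  set N1 : ℝ := (X₁.card : ℝ) with hN1'
  set N2 : ℝ := (X₂.card : ℝ) with hN2'
  set N3 : ℝ := (X₃.card : ℝ) with hN3'
  have hN1R : (0:ℝ) < N1 := by rw [hN1']; exact_mod_cast hN1
  have hN2R : (0:ℝ) < N2 := by rw [hN2']; exact_mod_cast hN2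
  have hN3R : (0:ℝ) < N3 := by rw [hN3']; exact_mod_cast hN3
  set a : ℝ := 1 / N1 with ha'
  set b : ℝ := -(1 / N3) with hb'
  set D : ℝ := 1 / N1 + 1 / N3 with hD'
  have hDpos : 0 < D := by positivity
  have ha0 : 0 < a := by positivity
  have hb0 : b < 0 := by rw [hb']; simp; positivity
  have hab : a - b = D := by rw [ha', hb', hD']; ring
  set f : Fin N → ℝ := fun i => if i ∈ X₁ then a else if i ∈ X₃ then b else 0 with hf'
  -- membership facts
  have hmem : ∀ i : Fin N, i ∈ X₁ ∨ i ∈ X₂ ∨ i ∈ X₃ := by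
    intro i
    have : i ∈ X₁ ∪ X₂ ∪ X₃ := by rw [hcover]; exact Finset.mem_univ i
    simpa [Finset.mem_union, or_assoc] using this
  have hf1 : ∀ i ∈ X₁, f i = a := fun i hi => by simp [hf', hi]
  have hf2 : ∀ i ∈ X₂, f i = 0 := fun i hi => by
    have h1 : i ∉ X₁ := Finset.disjoint_right.mp h12 hi
    have h3 : i ∉ X₃ := Finset.disjoint_left.mp h23 hi
    simp [hf', h1, h3]
  have hf3 : ∀ i ∈ X₃, f i = b := fun i hi => by
    have h1 : i ∉ X₁ := Finset.disjoint_right.mp h13 hi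
    simp [hf', h1, hi]
  have hsplit : ∀ u : Fin N → ℝ,
      ∑ i, u i = ∑ i ∈ X₁, u i + ∑ i ∈ X₂, u i + ∑ i ∈ X₃, u i := by
    intro u
    have d1 : Disjoint (X₁ ∪ X₂) X₃ := Finset.disjoint_union_left.mpr ⟨h13, h23⟩
    rw [show (Finset.univ : Finset (Fin N)) = X₁ ∪ X₂ ∪ X₃ from hcover.symm,
      Finset.sum_union d1, Finset.sum_union h12]
  have hsum : ∑ i, f i = 0 := by
    rw [hsplit f, Finset.sum_congr rfl hf1, Finset.sum_congr rfl hf2,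
      Finset.sum_congr rfl hf3]
    simp only [Finset.sum_const, nsmul_eq_mul, ← hN1', ← hN3', ha', hb']
    field_simp
    ring
  have hnorm : ∑ i, f i ^ 2 = D := by
    have e1 : ∀ i ∈ X₁, f i ^ 2 = a ^ 2 := fun i hi => by rw [hf1 i hi]
    have e2 : ∀ i ∈ X₂, f i ^ 2 = 0 := fun i hi => by rw [hf2 i hi]; ring
    have e3 : ∀ i ∈ X₃, f i ^ 2 = b ^ 2 := fun i hi => by rw [hf3 i hi]
    rw [hsplit (fun i => f i ^ 2), Finset.sum_congr rfl e1, Finset.sum_congr rfl e2,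
      Finset.sum_congr rfl e3]
    simp only [Finset.sum_const, nsmul_eq_mul, ← hN1', ← hN3', ha', hb', hD']
    field_simp
    ring
  -- bounds on f
  have hfub : ∀ i, f i ≤ a := by
    intro i
    by_cases h1 : i ∈ X₁
    · simp [hf', h1]
    · by_cases h3 : i ∈ X₃
      · simp only [hf', h1, if_false, h3, if_true]
        linarith
      · simp only [hf', h1, if_false, h3]
        linarith
  have hflb : ∀ i, b ≤ f i := by
    intro i
    by_cases h1 : i ∈ X₁
    · simp only [hf', h1, if_true]
      linarith
    · by_cases h3 : i ∈ X₃
      · simp [hf', h1, h3]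
      · simp only [hf', h1, if_false, h3]
        linarith
  have hsq : ∀ i j, (f i - f j) ^ 2 ≤ D ^ 2 := by
    intro i j
    have h1 := hfub i; have h2 := hflb i; have h3 := hfub j; have h4 := hflb j
    nlinarith [hab, hDpos]
  -- quadratic form bound
  set T : Fin N → Fin N → ℝ := fun i j => w i j * (f i - f j) ^ 2 with hT'
  have hTnn : ∀ i j, 0 ≤ T i j := fun i j => mul_nonneg (hnn i j) (sq_nonneg _)
  have hTsym : ∀ i j, T i j = T j i := fun i j => by
    rw [hT']; dsimp only; rw [hsym i j]; ring
  have hTzero : ∀ i j, i ∉ X₂ → j ∉ X₂ → T i j = 0 := by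
    intro i j hi hj
    rw [hT']; dsimp only
    rcases hmem i with hi1 | hi2 | hi3
    · rcases hmem j with hj1 | hj2 | hj3
      · rw [hf1 i hi1, hf1 j hj1]; ring
      · exact absurd hj2 hj
      · rw [hnoedge i hi1 j hj3]; ring
    · exact absurd hi2 hi
    · rcases hmem j with hj1 | hj2 | hj3
      · rw [hsym, hnoedge j hj1 i hi3]; ring
      · exact absurd hj2 hj
      · rw [hf3 i hi3, hf3 j hj3]; ring
  have hrow : ∀ i, ∑ j, T i j ≤ q * (wmax * D ^ 2) := by
    intro i
    have hterm : ∀ j, T i j ≤ if w i j ≠ 0 then wmax * D ^ 2 else 0 := by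
      intro j
      by_cases hw : w i j = 0
      · simp [hT', hw]
      · simp only [hw, ne_eq, not_false_iff, if_true]
        exact mul_le_mul (hwmax i j) (hsq i j) (sq_nonneg _) hwm0
    calc ∑ j, T i j ≤ ∑ j, if w i j ≠ 0 then wmax * D ^ 2 else 0 :=
          Finset.sum_le_sum fun j _ => hterm j
      _ = ∑ j ∈ Finset.univ.filter (fun j => w i j ≠ 0), wmax * D ^ 2 :=
          (Finset.sum_filter _ _).symm
      _ = ((Finset.univ.filter fun j => w i j ≠ 0).card : ℝ) * (wmax * D ^ 2) := by
          rw [Finset.sum_const, nsmul_eq_mul]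
      _ ≤ q * (wmax * D ^ 2) := by
          apply mul_le_mul_of_nonneg_right _ (by positivity)
          exact_mod_cast hdeg i
  have hdouble : ∑ i, ∑ j, T i j ≤ 2 * ∑ i ∈ X₂, ∑ j, T i j := by
    have hsplit2 : ∑ i, ∑ j, T i j
        = ∑ i ∈ Finset.univ.filter (· ∈ X₂), ∑ j, T i j
          + ∑ i ∈ Finset.univ.filter (¬ · ∈ X₂), ∑ j, T i j :=
      (Finset.sum_filter_add_sum_filter_not _ _ _).symm
    have hfilt : Finset.univ.filter (· ∈ X₂) = X₂ := Finset.filter_univ_mem X₂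
    have hout : ∑ i ∈ Finset.univ.filter (¬ · ∈ X₂), ∑ j, T i j
        ≤ ∑ i ∈ X₂, ∑ j, T i j := by
      have step1 : ∀ i ∈ Finset.univ.filter (¬ · ∈ X₂),
          ∑ j, T i j = ∑ j ∈ X₂, T i j := by
        intro i hi
        have hi2 : i ∉ X₂ := by simpa using hi
        exact (Finset.sum_subset (Finset.subset_univ X₂)
          fun j _ hj => hTzero i j hi2 hj).symm
      calc ∑ i ∈ Finset.univ.filter (¬ · ∈ X₂), ∑ j, T i j
          = ∑ i ∈ Finset.univ.filter (¬ · ∈ X₂), ∑ j ∈ X₂, T i j :=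
            Finset.sum_congr rfl step1
        _ ≤ ∑ i, ∑ j ∈ X₂, T i j :=
            Finset.sum_le_sum_of_subset_of_nonneg (Finset.filter_subset _ _)
              (fun i _ _ => Finset.sum_nonneg fun j _ => hTnn i j)
        _ = ∑ j ∈ X₂, ∑ i, T i j := Finset.sum_comm
        _ = ∑ j ∈ X₂, ∑ i, T j i :=
            Finset.sum_congr rfl fun j _ => Finset.sum_congr rfl fun i _ => hTsym i j
    rw [hsplit2, hfilt]
    linarith
  have hquadf : f ⬝ᵥ (lap w *ᵥ f) ≤ N2 * (q * (wmax * D ^ 2)) := by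
    rw [lap_quad w hsym hdiag f]
    have hraw : ∑ i, ∑ j, w i j * (f i - f j) ^ 2 = ∑ i, ∑ j, T i j := by
      simp only [hT']
    rw [hraw]
    have : ∑ i ∈ X₂, ∑ j, T i j ≤ ∑ i ∈ X₂, (q * (wmax * D ^ 2)) :=
      Finset.sum_le_sum fun i _ => hrow i
    rw [Finset.sum_const, nsmul_eq_mul] at this
    have h2 := hdouble
    have h4 : ∑ i, ∑ j, T i j ≤ 2 * (N2 * (q * (wmax * D ^ 2))) := by
      rw [hN2']; exact le_trans h2 (by linarith)
    have h5 : (1:ℝ)/2 * (∑ i, ∑ j, T i j) ≤ 1/2 * (2 * (N2 * (q * (wmax * D ^ 2)))) :=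
      mul_le_mul_of_nonneg_left h4 (by norm_num)
    calc (1:ℝ)/2 * (∑ i, ∑ j, T i j)
        ≤ 1/2 * (2 * (N2 * (q * (wmax * D ^ 2)))) := h5
      _ = N2 * (q * (wmax * D ^ 2)) := by ring
  -- apply lemA
  have hquadnn : ∀ x : Fin N → ℝ, 0 ≤ x ⬝ᵥ (lap w *ᵥ x) := by
    intro x
    rw [lap_quad w hsym hdiag x]
    have : 0 ≤ ∑ i, ∑ j, w i j * (x i - x j) ^ 2 :=
      Finset.sum_nonneg fun i _ => Finset.sum_nonneg fun j _ =>
        mul_nonneg (hnn i j) (sq_nonneg _)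
    linarith
  have hA := lemA hN hH hquadnn (lap_mulVec_one w hdiag) f hsum
  rw [hnorm] at hA
  have hchain : sortedEig hH ⟨1, hN⟩ * D ≤ (N2 * (q * (wmax * D))) * D := by
    calc sortedEig hH ⟨1, hN⟩ * D ≤ f ⬝ᵥ (lap w *ᵥ f) := hA
      _ ≤ N2 * (q * (wmax * D ^ 2)) := hquadf
      _ = (N2 * (q * (wmax * D))) * D := by ring
  have hfin : sortedEig hH ⟨1, hN⟩ ≤ N2 * (q * (wmax * D)) :=
    le_of_mul_le_mul_right hchain hDpos
  have hgoal_eq : (q : ℝ) * wmax * (N2 / N1 + N2 / N3) = N2 * (q * (wmax * D)) := by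
    rw [hD']
    ring
  rw [hgoal_eq]
  exact hfin

end quadbound

/-- A family of bounded-degree, bounded-weight graphs with persistent
bottlenecks (N₂/N₁ → 0 and N₂/N₃ → 0) has vanishing algebraic connectivity:
λ₂(G_N) → 0 as N → ∞. -/
theorem stmt3 (q : ℕ) (wmax : ℝ)
    (sz : ℕ → ℕ) (hsz : ∀ n, 2 ≤ sz n)
    (hszTop : Tendsto sz atTop atTop)
    (w : ∀ n, Fin (sz n) → Fin (sz n) → ℝ)
    (hsym : ∀ n i j, w n i j = w n j i) (hnn : ∀ n i j, 0 ≤ w n i j)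
    (hdiag : ∀ n i, w n i i = 0)
    (hwmax : ∀ n i j, w n i j ≤ wmax)
    (hdeg : ∀ n i, (Finset.univ.filter fun j => w n i j ≠ 0).card ≤ q)
    (X₁ X₂ X₃ : ∀ n, Finset (Fin (sz n)))
    (h12 : ∀ n, Disjoint (X₁ n) (X₂ n)) (h13 : ∀ n, Disjoint (X₁ n) (X₃ n))
    (h23 : ∀ n, Disjoint (X₂ n) (X₃ n))
    (hcover : ∀ n, X₁ n ∪ X₂ n ∪ X₃ n = Finset.univ)
    (hN1 : ∀ n, 0 < (X₁ n).card) (hN2 : ∀ n, 0 < (X₂ n).card)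
    (hN3 : ∀ n, 0 < (X₃ n).card)
    (hnoedge : ∀ n, ∀ i ∈ X₁ n, ∀ j ∈ X₃ n, w n i j = 0)
    (hH : ∀ n, (lap (w n)).IsHermitian)
    (h21 : Tendsto (fun n => ((X₂ n).card : ℝ) / ((X₁ n).card : ℝ)) atTop (nhds 0))
    (h23t : Tendsto (fun n => ((X₂ n).card : ℝ) / ((X₃ n).card : ℝ)) atTop (nhds 0)) :
    Tendsto (fun n => sortedEig (hH n) ⟨1, by have := hsz n; omega⟩) atTop (nhds 0) := by
  have hwm0 : 0 ≤ wmax := by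
    have h2 := hsz 0
    exact le_trans (hnn 0 ⟨0, by omega⟩ ⟨0, by omega⟩) (hwmax 0 ⟨0, by omega⟩ ⟨0, by omega⟩)
  have hub : ∀ n, sortedEig (hH n) ⟨1, by have := hsz n; omega⟩
      ≤ (q : ℝ) * wmax * ((((X₂ n).card : ℝ) / ((X₁ n).card : ℝ))
          + (((X₂ n).card : ℝ) / ((X₃ n).card : ℝ))) := by
    intro n
    have h1n : 1 < sz n := by have := hsz n; omega
    exact perN h1n q wmax hwm0 (w n) (hsym n) (hnn n) (hdiag n) (hwmax n) (hdeg n)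
      (X₁ n) (X₂ n) (X₃ n) (h12 n) (h13 n) (h23 n) (hcover n) (hN1 n) (hN2 n)
      (hN3 n) (hnoedge n) (hH n)
  have hlb : ∀ n, 0 ≤ sortedEig (hH n) ⟨1, by have := hsz n; omega⟩ := by
    intro n
    have hq : ∀ x, 0 ≤ x ⬝ᵥ (lap (w n) *ᵥ x) := by
      intro x
      rw [lap_quad (w n) (hsym n) (hdiag n) x]
      have : 0 ≤ ∑ i, ∑ j, w n i j * (x i - x j) ^ 2 :=
        Finset.sum_nonneg fun i _ => Finset.sum_nonneg fun j _ =>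
          mul_nonneg (hnn n i j) (sq_nonneg _)
      linarith
    have hPSD : (lap (w n)).PosSemidef := Matrix.posSemidef_iff_dotProduct_mulVec.mpr ⟨hH n, fun x => by simpa using hq x⟩
    exact hPSD.eigenvalues_nonneg _
  have hg : Tendsto (fun n => (q : ℝ) * wmax * ((((X₂ n).card : ℝ) / ((X₁ n).card : ℝ))
      + (((X₂ n).card : ℝ) / ((X₃ n).card : ℝ)))) atTop (nhds 0) := by
    have := (h21.add h23t).const_mul ((q : ℝ) * wmax)
    simpa using this
  exact squeeze_zero hlb hub hg
end

section
/- Let L be the weighted Laplacian of a weighted undirected graph on N ≥ 2 vertices in which vertex 1 has at most q neighbors and all edge weights are at most w_max. Then the smallest eigenvalue of the grounded Laplacian L̄ (L with row and column 1 removed) satisfies λ̄₁ ≤ q·w_max/(N−1). -/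
open Matrix

lemma rayleigh_min {n : ℕ} {A : Matrix (Fin n) (Fin n) ℝ} (hA : A.IsHermitian)
    (c : ℝ) (hc : ∀ i, c ≤ hA.eigenvalues i) (x : Fin n → ℝ) :
    c * (x ⬝ᵥ x) ≤ x ⬝ᵥ A *ᵥ x := by
  set U : Matrix (Fin n) (Fin n) ℝ := (hA.eigenvectorUnitary : Matrix (Fin n) (Fin n) ℝ) with hU
  set y : Fin n → ℝ := star U *ᵥ x with hy
  have hUU : U * star U = 1 := mem_unitaryGroup_iff.mp hA.eigenvectorUnitary.2
  have hUU' : star U * U = 1 := mem_unitaryGroup_iff'.mp hA.eigenvectorUnitary.2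
  have hvm : ∀ z : Fin n → ℝ, z ᵥ* U = star U *ᵥ z := by
    intro z
    ext j
    simp [vecMul, mulVec, dotProduct, mul_comm]
  have h1 : x ⬝ᵥ A *ᵥ x = ∑ i, hA.eigenvalues i * (y i)^2 := by
    conv_lhs => rw [hA.spectral_theorem, Unitary.conjStarAlgAut_apply]
    rw [← mulVec_mulVec, ← mulVec_mulVec, dotProduct_mulVec, hvm, ← hy]
    simp [mulVec_diagonal, dotProduct, mul_comm, sq, mul_assoc, mul_left_comm]
  have h2 : x ⬝ᵥ x = ∑ i, (y i)^2 := by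
    have hx : x = U *ᵥ y := by
      rw [hy, mulVec_mulVec, hUU, one_mulVec]
    conv_lhs => rw [hx]
    rw [dotProduct_mulVec, hvm, mulVec_mulVec, hUU', one_mulVec]
    simp [dotProduct, sq]
  rw [h1, h2, Finset.mul_sum]
  apply Finset.sum_le_sum
  intro i _
  exact mul_le_mul_of_nonneg_right (hc i) (sq_nonneg _)

/-- If the grounded vertex (vertex 0) has at most q neighbors and all edge
weights are at most w_max, then the smallest eigenvalue of the grounded
Laplacian satisfies λ̄₁ ≤ q·w_max/(N − 1), where N = M + 1. -/
theorem stmt5 {M q : ℕ} (hM : 1 ≤ M) (wmax : ℝ)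
    (w : Fin (M + 1) → Fin (M + 1) → ℝ)
    (hsym : ∀ i j, w i j = w j i) (hnn : ∀ i j, 0 ≤ w i j)
    (hdiag : ∀ i, w i i = 0)
    (hwmax : ∀ i j, w i j ≤ wmax)
    (hdeg : (Finset.univ.filter fun j => w 0 j ≠ 0).card ≤ q)
    (hH : ((lap w).submatrix Fin.succ Fin.succ).IsHermitian) :
    sortedEig hH ⟨0, by omega⟩ ≤ (q : ℝ) * wmax / (M : ℝ) := by
  set c : ℝ := sortedEig hH ⟨0, by omega⟩ with hc
  -- c is a lower bound for all eigenvalues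
  have hmin : ∀ i, c ≤ hH.eigenvalues i := by
    intro i
    have hmono : Monotone (hH.eigenvalues ∘ Tuple.sort hH.eigenvalues) :=
      Tuple.monotone_sort hH.eigenvalues
    have : hH.eigenvalues i =
        (hH.eigenvalues ∘ Tuple.sort hH.eigenvalues) ((Tuple.sort hH.eigenvalues)⁻¹ i) := by
      simp
    rw [this]
    exact hmono (Fin.mk_le_of_le_val (Nat.zero_le _))
  have hray := rayleigh_min hH c hmin (fun _ => (1 : ℝ))
  have hones : (fun _ : Fin M => (1:ℝ)) ⬝ᵥ (fun _ => (1:ℝ)) = (M : ℝ) := by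
    simp [dotProduct]
  -- quadratic form of ones equals sum of all entries, which equals ∑ k, w 0 k
  have hquad : (fun _ : Fin M => (1:ℝ)) ⬝ᵥ ((lap w).submatrix Fin.succ Fin.succ) *ᵥ
      (fun _ => (1:ℝ)) = ∑ k, w 0 k := by
    have hrow : ∀ i : Fin M, ∑ j : Fin M, (lap w).submatrix Fin.succ Fin.succ i j
        = w i.succ 0 := by
      intro i
      have : ∑ j : Fin M, (lap w).submatrix Fin.succ Fin.succ i j
          = (∑ k, w i.succ k) + ∑ j : Fin M, (if i = j then 0 else - w i.succ j.succ) := by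
        rw [show (∑ k, w i.succ k) = ∑ j : Fin M, (if i = j then (∑ k, w i.succ k) else 0) by
          simp]
        rw [← Finset.sum_add_distrib]
        apply Finset.sum_congr rfl
        intro j _
        simp only [submatrix_apply, lap, of_apply]
        by_cases h : i = j
        · simp [h, Fin.succ_inj]
        · have : ¬ (i.succ = j.succ) := by simpa [Fin.succ_inj] using h
          simp [h, this]
      rw [this]
      have h2 : ∑ j : Fin M, (if i = j then 0 else - w i.succ j.succ)
          = - ∑ j : Fin M, w i.succ j.succ := by
        rw [← Finset.sum_neg_distrib]
        apply Finset.sum_congr rfl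
        intro j _
        by_cases h : i = j
        · simp [h, hdiag]
        · simp [h]
      rw [h2, Fin.sum_univ_succ (f := fun k => w i.succ k)]
      ring
    calc (fun _ : Fin M => (1:ℝ)) ⬝ᵥ ((lap w).submatrix Fin.succ Fin.succ) *ᵥ (fun _ => (1:ℝ))
        = ∑ i : Fin M, ∑ j : Fin M, (lap w).submatrix Fin.succ Fin.succ i j := by
          simp [dotProduct, mulVec]
      _ = ∑ i : Fin M, w i.succ 0 := by
          exact Finset.sum_congr rfl fun i _ => hrow i
      _ = ∑ i : Fin M, w 0 i.succ := by
          exact Finset.sum_congr rfl fun i _ => hsym _ _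
      _ = ∑ k, w 0 k := by
          rw [Fin.sum_univ_succ (f := fun k => w 0 k), hdiag, zero_add]
  have hwmax0 : 0 ≤ wmax := le_trans (hnn 0 0) (hwmax 0 0)
  have hsum : ∑ k, w 0 k ≤ (q : ℝ) * wmax := by
    have h1 : ∑ k, w 0 k = ∑ k ∈ Finset.univ.filter (fun j => w 0 j ≠ 0), w 0 k := by
      rw [Finset.sum_filter_ne_zero]
    rw [h1]
    calc ∑ k ∈ Finset.univ.filter (fun j => w 0 j ≠ 0), w 0 k
        ≤ ∑ _k ∈ Finset.univ.filter (fun j => w 0 j ≠ 0), wmax :=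
          Finset.sum_le_sum fun k _ => hwmax 0 k
      _ = (Finset.univ.filter (fun j => w 0 j ≠ 0)).card * wmax := by
          rw [Finset.sum_const, nsmul_eq_mul]
      _ ≤ (q : ℝ) * wmax := by
          apply mul_le_mul_of_nonneg_right _ hwmax0
          exact_mod_cast hdeg
  have hM0 : (0 : ℝ) < (M : ℝ) := by exact_mod_cast hM
  rw [le_div_iff₀ hM0]
  calc c * (M : ℝ) = c * ((fun _ : Fin M => (1:ℝ)) ⬝ᵥ (fun _ => (1:ℝ))) := by rw [hones]
    _ ≤ _ := hray
    _ = ∑ k, w 0 k := hquad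
    _ ≤ (q : ℝ) * wmax := hsum
end
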